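/- Let G ≤ PL₊(I) and suppose (A₁,g₁) and (A₂,g₂) are factor signed orbitals associated to elements of G with the closure of A₁ contained in A₂. Then the conjugate g₁^{g₂} = g₂⁻¹g₁g₂ is a one-bump factor of an element of G, with support A₁·g₂ ⊆ A₂. -/
import Mathlib


open Set

namespace PLPaper

/-- We model `PL₊(I)` inside the group of bijections of `ℝ` with *opposite*
composition, so that the group acts on `ℝ` on the right:
`x · (g * h) = (x · g) · h`. -/
abbrev PermR : Type := (Equiv.Perm ℝ)ᵐᵒᵖ

/-- The (right) action of `g` on the point `x`. -/
def ap (g : PermR) (x : ℝ) : ℝ := g.unop x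

/-- `g` is affine on a neighbourhood of `x`. -/
def IsLocallyAffineAt (g : PermR) (x : ℝ) : Prop :=
  ∃ m b : ℝ, ∀ᶠ y in nhds x, ap g y = m * y + b

/-- The breakpoints of `g`: points of `(0,1)` where `g` is not locally affine
(equivalently, for a PL map, where the derivative fails to exist). -/
def Breakpoints (g : PermR) : Set ℝ :=
  {x ∈ Ioo (0:ℝ) 1 | ¬ IsLocallyAffineAt g x}

/-- `g` is an orientation-preserving piecewise-linear homeomorphism of `[0,1]`
(extended by the identity to all of `ℝ`), with finitely many breakpoints. -/
def IsPL (g : PermR) : Prop :=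
  StrictMono (ap g) ∧ (∀ x ∉ Ioo (0:ℝ) 1, ap g x = x) ∧ (Breakpoints g).Finite

/-- The support of `g`. -/
def Supp (g : PermR) : Set ℝ := {x | ap g x ≠ x}

/-- `(a,b)` is an orbital of `g`, i.e. a connected component of `Supp g`. -/
def IsOrbital (g : PermR) (a b : ℝ) : Prop :=
  a < b ∧ Ioo a b ⊆ Supp g ∧ a ∉ Supp g ∧ b ∉ Supp g

/-- The support of a subgroup `G`. -/
def GSupp (G : Subgroup PermR) : Set ℝ := ⋃ g ∈ (G : Set PermR), Supp g

/-- `(a,b)` is an orbital of the group `G`, i.e. a connected component of its support. -/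
def IsGroupOrbital (G : Subgroup PermR) (a b : ℝ) : Prop :=
  a < b ∧ Ioo a b ⊆ GSupp G ∧ a ∉ GSupp G ∧ b ∉ GSupp G

/-- The pair `g, h` carries a transition chain: orbitals `(a,b)` of `g` and
`(c,d)` of `h` with `a < c < b < d`. -/
def ElemsTransitionChain (g h : PermR) : Prop :=
  ∃ a b c d : ℝ, IsOrbital g a b ∧ IsOrbital h c d ∧ a < c ∧ c < b ∧ b < d

/-- The pair `g, h` carries a one-sided overlap: orbitals `(a,b)` of `g` and
`(a,c)` of `h`, or `(a,b)` of `g` and `(c,b)` of `h`, where `a < c < b`. -/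
def ElemsOneSidedOverlap (g h : PermR) : Prop :=
  ∃ a b c : ℝ, a < c ∧ c < b ∧
    ((IsOrbital g a b ∧ IsOrbital h a c) ∨ (IsOrbital g a b ∧ IsOrbital h c b))

def AdmitsTransitionChain (G : Subgroup PermR) : Prop :=
  ∃ g ∈ G, ∃ h ∈ G, ElemsTransitionChain g h

def AdmitsOneSidedOverlap (G : Subgroup PermR) : Prop :=
  ∃ g ∈ G, ∃ h ∈ G, ElemsOneSidedOverlap g h

/-- `G` admits a bad overlap: orbitals `A` of `f ∈ G` and `B` of `g ∈ G` which
intersect, are distinct, and neither closure is contained in the other orbital. -/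
def AdmitsBadOverlap (G : Subgroup PermR) : Prop :=
  ∃ f ∈ G, ∃ g ∈ G, ∃ a b c d : ℝ, IsOrbital f a b ∧ IsOrbital g c d ∧
    (Ioo a b ∩ Ioo c d).Nonempty ∧ Ioo a b ≠ Ioo c d ∧
    ¬ Icc a b ⊆ Ioo c d ∧ ¬ Icc c d ⊆ Ioo a b

/-- A tower: a set of signed orbitals `((a,b), g)` with pairwise nested orbitals,
where equal orbitals force equal signatures. -/
def IsTower (T : Set ((ℝ × ℝ) × PermR)) : Prop :=
  (∀ p ∈ T, IsOrbital p.2 p.1.1 p.1.2) ∧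
  (∀ p ∈ T, ∀ q ∈ T,
      Ioo p.1.1 p.1.2 ⊆ Ioo q.1.1 q.1.2 ∨ Ioo q.1.1 q.1.2 ⊆ Ioo p.1.1 p.1.2) ∧
  (∀ p ∈ T, ∀ q ∈ T, p.1 = q.1 → p.2 = q.2)

/-- `G` admits the tower `T` if `T` is a tower all of whose signatures lie in `G`. -/
def AdmitsTower (G : Subgroup PermR) (T : Set ((ℝ × ℝ) × PermR)) : Prop :=
  IsTower T ∧ ∀ p ∈ T, p.2 ∈ G

def AdmitsInfiniteTower (G : Subgroup PermR) : Prop :=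
  ∃ T : Set ((ℝ × ℝ) × PermR), AdmitsTower G T ∧ T.Infinite

/-- The set of breakpoints of the elements of a set `S`. -/
def BreakSet (S : Set PermR) : Set ℝ := ⋃ g ∈ S, Breakpoints g

/-- The derived length of a group: the least `n` with `derivedSeries G n = ⊥`. -/
noncomputable def derivedLength (G : Type*) [Group G] : ℕ :=
  sInf {n : ℕ | derivedSeries G n = ⊥}

/-- `g` is the one-bump factor of `f` over the orbital `(a,b)` of `f`:
`g` agrees with `f` on `(a,b)` and is the identity elsewhere. -/
def IsOneBumpFactor (g f : PermR) (a b : ℝ) : Prop :=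
  IsOrbital f a b ∧ (∀ x ∈ Ioo a b, ap g x = ap f x) ∧ (∀ x ∉ Ioo a b, ap g x = x)

/-- `g` is a one-bump factor of `f`. -/
def IsFactorOf (g f : PermR) : Prop := ∃ a b : ℝ, IsOneBumpFactor g f a b

/-- `((a,b), g)` is a factor signed orbital associated to (an element of) `G`. -/
def AssociatedFactor (G : Subgroup PermR) (a b : ℝ) (g : PermR) : Prop :=
  ∃ f ∈ G, IsOneBumpFactor g f a b

/-- The split group `S(G)`: the subgroup generated by the one-bump factors of
all elements of `G`. -/
def SplitGroup (G : Subgroup PermR) : Subgroup PermR :=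
  Subgroup.closure {g : PermR | ∃ f ∈ G, IsFactorOf g f}

lemma ap_mul (g h : PermR) (x : ℝ) : ap (g * h) x = ap h (ap g x) := rfl

lemma ap_inv_ap (g : PermR) (x : ℝ) : ap g⁻¹ (ap g x) = x := by
  simp [ap]

lemma ap_ap_inv (g : PermR) (x : ℝ) : ap g (ap g⁻¹ x) = x := by
  simp [ap]

lemma ap_injective (g : PermR) : Function.Injective (ap g) := g.unop.injective

lemma fix_of_not_supp {g : PermR} {x : ℝ} (h : x ∉ Supp g) : ap g x = x :=
  not_not.mp h

lemma onebump_strictMono {g f : PermR} {a b : ℝ} (hf : StrictMono (ap f))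
    (h : IsOneBumpFactor g f a b) : StrictMono (ap g) := by
  obtain ⟨⟨hab, hsub, ha, hb⟩, heq, hid⟩ := h
  have hfa : ap f a = a := not_not.mp ha
  have hfb : ap f b = b := not_not.mp hb
  have hmaps : ∀ x ∈ Ioo a b, ap g x ∈ Ioo a b := fun x hx => by
    rw [heq x hx]
    exact ⟨hfa ▸ hf hx.1, hfb ▸ hf hx.2⟩
  intro x y hxy
  by_cases hx : x ∈ Ioo a b <;> by_cases hy : y ∈ Ioo a b
  · rw [heq x hx, heq y hy]; exact hf hxy
  · have hby : b ≤ y := le_of_not_gt fun hyb => hy ⟨hx.1.trans hxy, hyb⟩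
    rw [hid y hy]
    exact lt_of_lt_of_le (hmaps x hx).2 hby
  · have hxa : x ≤ a := le_of_not_gt fun hax => hx ⟨hax, hxy.trans hy.2⟩
    rw [hid x hx]
    exact lt_of_le_of_lt hxa (hmaps y hy).1
  · rw [hid x hx, hid y hy]; exact hxy

lemma image_Ioo_of_strictMono {g : PermR} (hg : StrictMono (ap g)) (a b : ℝ) :
    ap g '' Ioo a b = Ioo (ap g a) (ap g b) := by
  ext y
  constructor
  · rintro ⟨x, hx, rfl⟩
    exact ⟨hg hx.1, hg hx.2⟩
  · intro hy
    refine ⟨ap g⁻¹ y, ⟨?_, ?_⟩, ap_ap_inv g y⟩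
    · have h1 : ap g a < ap g (ap g⁻¹ y) := by rw [ap_ap_inv]; exact hy.1
      exact hg.lt_iff_lt.mp h1
    · have h1 : ap g (ap g⁻¹ y) < ap g b := by rw [ap_ap_inv]; exact hy.2
      exact hg.lt_iff_lt.mp h1

lemma supp_conj (g h : PermR) : Supp (h⁻¹ * g * h) = ap h '' Supp g := by
  ext x
  have hap : ap (h⁻¹ * g * h) x = ap h (ap g (ap h⁻¹ x)) := rfl
  constructor
  · intro hx
    refine ⟨ap h⁻¹ x, ?_, ap_ap_inv h x⟩
    intro hz
    apply hx
    show ap (h⁻¹ * g * h) x = x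
    rw [hap, hz, ap_ap_inv]
  · rintro ⟨z, hz, rfl⟩
    show ap (h⁻¹ * g * h) (ap h z) ≠ ap h z
    rw [hap, ap_inv_ap]
    exact fun e => hz (ap_injective h e)

lemma supp_onebump {g f : PermR} {a b : ℝ} (h : IsOneBumpFactor g f a b) :
    Supp g = Ioo a b := by
  obtain ⟨⟨hab, hsub, ha, hb⟩, heq, hid⟩ := h
  ext x
  constructor
  · intro hx
    by_contra hmem
    exact hx (hid x hmem)
  · intro hx
    show ap g x ≠ x
    rw [heq x hx]
    exact hsub hx

theorem statement11 (G : Subgroup PermR) (hPL : ∀ g ∈ G, IsPL g)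
    (a₁ b₁ a₂ b₂ : ℝ) (g₁ g₂ : PermR)
    (h1 : AssociatedFactor G a₁ b₁ g₁) (h2 : AssociatedFactor G a₂ b₂ g₂)
    (hcl : Icc a₁ b₁ ⊆ Ioo a₂ b₂) :
    (∃ f ∈ G, IsFactorOf (g₂⁻¹ * g₁ * g₂) f) ∧
    Supp (g₂⁻¹ * g₁ * g₂) = ap g₂ '' Ioo a₁ b₁ ∧
    ap g₂ '' Ioo a₁ b₁ ⊆ Ioo a₂ b₂ := by
  obtain ⟨f₁, hf₁G, hob₁⟩ := h1
  obtain ⟨f₂, hf₂G, hob₂⟩ := h2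
  have hPL₁ := hPL f₁ hf₁G
  have hPL₂ := hPL f₂ hf₂G
  have hmono₂ : StrictMono (ap g₂) := onebump_strictMono hPL₂.1 hob₂
  have hsuppg₁ : Supp g₁ = Ioo a₁ b₁ := supp_onebump hob₁
  obtain ⟨⟨hab₁, hsub₁, ha₁, hb₁⟩, heq₁, hid₁⟩ := hob₁
  obtain ⟨⟨hab₂, hsub₂, ha₂, hb₂⟩, heq₂, hid₂⟩ := hob₂
  have hIoo : Ioo a₁ b₁ ⊆ Ioo a₂ b₂ := Ioo_subset_Icc_self.trans hcl
  have ha₁mem : a₁ ∈ Ioo a₂ b₂ := hcl ⟨le_refl a₁, hab₁.le⟩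
  have hb₁mem : b₁ ∈ Ioo a₂ b₂ := hcl ⟨hab₁.le, le_refl b₁⟩
  have hfa₁ : ap f₁ a₁ = a₁ := not_not.mp ha₁
  have hfb₁ : ap f₁ b₁ = b₁ := not_not.mp hb₁
  have hmaps₁ : ∀ x ∈ Ioo a₁ b₁, ap f₁ x ∈ Ioo a₁ b₁ := fun x hx =>
    ⟨hfa₁ ▸ hPL₁.1 hx.1, hfb₁ ▸ hPL₁.1 hx.2⟩
  have hsuppconj : Supp (g₂⁻¹ * g₁ * g₂) = ap g₂ '' Ioo a₁ b₁ := by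
    rw [supp_conj, hsuppg₁]
  have himg : ap g₂ '' Ioo a₁ b₁ = Ioo (ap g₂ a₁) (ap g₂ b₁) :=
    image_Ioo_of_strictMono hmono₂ a₁ b₁
  have hfa₂ : ap f₂ a₂ = a₂ := not_not.mp ha₂
  have hfb₂ : ap f₂ b₂ = b₂ := not_not.mp hb₂
  have himgsub : ap g₂ '' Ioo a₁ b₁ ⊆ Ioo a₂ b₂ := by
    rintro x ⟨z, hz, rfl⟩
    rw [heq₂ z (hIoo hz)]
    exact ⟨hfa₂ ▸ hPL₂.1 (hIoo hz).1, hfb₂ ▸ hPL₂.1 (hIoo hz).2⟩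
  have hfinv : ∀ y ∈ Ioo a₂ b₂, ap f₂⁻¹ (ap g₂ y) = y := fun y hy => by
    rw [heq₂ y hy, ap_inv_ap]
  have hsuppF : Supp (f₂⁻¹ * f₁ * f₂) = ap f₂ '' Supp f₁ := supp_conj f₁ f₂
  have hapF : ∀ x, ap (f₂⁻¹ * f₁ * f₂) x = ap f₂ (ap f₁ (ap f₂⁻¹ x)) := fun _ => rfl
  have hapG : ∀ x, ap (g₂⁻¹ * g₁ * g₂) x = ap g₂ (ap g₁ (ap g₂⁻¹ x)) := fun _ => rfl
  refine ⟨⟨f₂⁻¹ * f₁ * f₂, mul_mem (mul_mem (inv_mem hf₂G) hf₁G) hf₂G,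
    ap g₂ a₁, ap g₂ b₁, ⟨hmono₂ hab₁, ?_, ?_, ?_⟩, ?_, ?_⟩, hsuppconj, himgsub⟩
  · -- Ioo (ap g₂ a₁) (ap g₂ b₁) ⊆ Supp (f₂⁻¹ * f₁ * f₂)
    intro x hx
    rw [← himg] at hx
    obtain ⟨y, hy, rfl⟩ := hx
    rw [hsuppF, heq₂ y (hIoo hy)]
    exact ⟨y, hsub₁ hy, rfl⟩
  · -- ap g₂ a₁ ∉ Supp
    rw [hsuppF]
    rintro ⟨z, hz, hze⟩
    rw [heq₂ a₁ ha₁mem] at hze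
    exact ha₁ (ap_injective f₂ hze ▸ hz)
  · rw [hsuppF]
    rintro ⟨z, hz, hze⟩
    rw [heq₂ b₁ hb₁mem] at hze
    exact hb₁ (ap_injective f₂ hze ▸ hz)
  · -- agreement on the orbital
    intro x hx
    rw [← himg] at hx
    obtain ⟨y, hy, rfl⟩ := hx
    have hy₂ : y ∈ Ioo a₂ b₂ := hIoo hy
    have hz : ap f₁ y ∈ Ioo a₁ b₁ := hmaps₁ y hy
    rw [hapG, hapF, ap_inv_ap, hfinv y hy₂, heq₁ y hy, heq₂ _ (hIoo hz)]
  · -- identity off the orbital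
    intro x hx
    rw [← himg, ← hsuppconj] at hx
    exact fix_of_not_supp hx

end PLPaper
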